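/- Under Assumptions A, B, C (each g_i twice continuously differentiable) and E (P₂ = 0 and f, g₁, …, g_m convex), if bar F is a KL function with exponent α ∈ [0,1), then F is also a KL function with exponent α. -/

import Mathlib

open Set Filter Topology Metric Bornology RealInnerProductSpace
open scoped Classical

noncomputable section

abbrev Euc (n : ℕ) : Type := EuclideanSpace ℝ (Fin n)

/-- Convex subdifferential of a real-valued function on an inner product space. -/
def ConvexSubdiff {H : Type*} [NormedAddCommGroup H] [InnerProductSpace ℝ H]
    (P : H → ℝ) (x : H) : Set H :=
  {ζ | ∀ y, ⟪ζ, y - x⟫ ≤ P y - P x}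

/-- Regular (Fréchet) subdifferential of an extended-real-valued function. -/
def RegularSubdiff {H : Type*} [NormedAddCommGroup H] [InnerProductSpace ℝ H]
    (h : H → EReal) (x : H) : Set H :=
  {ζ | h x ≠ ⊤ ∧ h x ≠ ⊥ ∧ ∀ ε : ℝ, 0 < ε →
    ∀ᶠ z in 𝓝 x,
      (((h x).toReal + ⟪ζ, z - x⟫ - ε * ‖z - x‖ : ℝ) : EReal) ≤ h z}

/-- Limiting (Mordukhovich) subdifferential. -/
def LimSubdiff {H : Type*} [NormedAddCommGroup H] [InnerProductSpace ℝ H]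
    (h : H → EReal) (x : H) : Set H :=
  {ζ | ∃ xs ζs : ℕ → H, (∀ k, ζs k ∈ RegularSubdiff h (xs k)) ∧
    Tendsto xs atTop (𝓝 x) ∧ Tendsto (fun k => h (xs k)) atTop (𝓝 (h x)) ∧
    Tendsto ζs atTop (𝓝 ζ)}

/-- The Kurdyka–Łojasiewicz property with exponent `α` at a point. -/
def KLExpAt {H : Type*} [NormedAddCommGroup H] [InnerProductSpace ℝ H]
    (h : H → EReal) (α : ℝ) (xhat : H) : Prop :=
  ∃ a₀ : ℝ, 0 < a₀ ∧ ∃ a : ℝ, 0 < a ∧ ∃ V ∈ 𝓝 xhat, ∀ x ∈ V,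
    h xhat < h x → h x < h xhat + (a : EReal) →
    1 ≤ a₀ * (1 - α) * ((h x).toReal - (h xhat).toReal) ^ (-α) *
        infDist 0 (LimSubdiff h x)

/-- The general Kurdyka–Łojasiewicz property at a point. -/
def KLAt {H : Type*} [NormedAddCommGroup H] [InnerProductSpace ℝ H]
    (h : H → EReal) (xhat : H) : Prop :=
  ∃ a : ℝ, 0 < a ∧ ∃ V ∈ 𝓝 xhat, ∃ φ φ' : ℝ → ℝ,
    φ 0 = 0 ∧ ContinuousOn φ (Ico 0 a) ∧ ConcaveOn ℝ (Ico 0 a) φ ∧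
    (∀ s ∈ Ioo 0 a, HasDerivAt φ (φ' s) s ∧ 0 < φ' s) ∧
    ∀ x ∈ V, h xhat < h x → h x < h xhat + (a : EReal) →
      1 ≤ φ' ((h x).toReal - (h xhat).toReal) * infDist 0 (LimSubdiff h x)

/-- The extended objective of problem (P). -/
def Fobj {n m : ℕ} (f P1 P2 : Euc n → ℝ) (g : Fin m → Euc n → ℝ) (x : Euc n) : EReal :=
  if ∀ i, g i x ≤ 0 then ((f x + P1 x - P2 x : ℝ) : EReal) else ⊤

/-- The moving balls constraint functions. -/
def barG {n m : ℕ} (g : Fin m → Euc n → ℝ) (g' : Fin m → Euc n → Euc n)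
    (x y : Euc n) (w : EuclideanSpace ℝ (Fin m)) (i : Fin m) : ℝ :=
  g i y + ⟪g' i y, x - y⟫ + w i / 2 * ‖x - y‖ ^ 2

/-- The space `ℝⁿ × ℝⁿ × ℝᵐ` with the (L²) Euclidean inner product. -/
abbrev PS (n m : ℕ) : Type :=
  WithLp 2 (Euc n × WithLp 2 (Euc n × EuclideanSpace ℝ (Fin m)))

/-- The potential function `bar F`. -/
def barF {n m : ℕ} (f P1 P2 : Euc n → ℝ) (g : Fin m → Euc n → ℝ)
    (g' : Fin m → Euc n → Euc n)
    (p : PS n m) : EReal :=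
  if ∀ i, barG g g' p.ofLp.1 p.ofLp.2.ofLp.1 p.ofLp.2.ofLp.2 i ≤ 0 then
    ((f p.ofLp.1 + P1 p.ofLp.1 - P2 p.ofLp.1 : ℝ) : EReal) else ⊤

/-- Stationary points of problem (P). -/
def IsStationaryPt {n m : ℕ} (f P1 P2 : Euc n → ℝ) (f' : Euc n → Euc n)
    (g : Fin m → Euc n → ℝ) (g' : Fin m → Euc n → Euc n) (x : Euc n) : Prop :=
  (∀ i, g i x ≤ 0) ∧ ∃ lam : Fin m → ℝ, (∀ i, 0 ≤ lam i) ∧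
    (∀ i, lam i * g i x = 0) ∧
    ∃ u ∈ ConvexSubdiff P1 x, ∃ v ∈ ConvexSubdiff P2 x,
      f' x + u - v + ∑ i, lam i • g' i x = 0

/-- Assumptions A (smoothness, Lipschitz gradients, level-boundedness) and B (MFCQ). -/
def AssumptionAB {n m : ℕ} (f P1 P2 : Euc n → ℝ) (f' : Euc n → Euc n)
    (g : Fin m → Euc n → ℝ) (g' : Fin m → Euc n → Euc n)
    (Lf : ℝ) (Lg : Fin m → ℝ) : Prop :=
  (∀ x, HasGradientAt f (f' x) x) ∧ LipschitzWith Lf.toNNReal f' ∧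
  ConvexOn ℝ univ P1 ∧ Continuous P1 ∧ ConvexOn ℝ univ P2 ∧ Continuous P2 ∧
  (∀ i x, HasGradientAt (g i) (g' i x) x) ∧
  (∀ i, LipschitzWith (Lg i).toNNReal (g' i)) ∧
  {x : Euc n | ∀ i, g i x ≤ 0}.Nonempty ∧
  (∀ σ : ℝ, IsBounded {x | Fobj f P1 P2 g x ≤ (σ : EReal)}) ∧
  (∀ x : Euc n, (∀ i, g i x ≤ 0) → ∃ d, ∀ i, g i x = 0 → ⟪g' i x, d⟫ < 0)

/-- The sequences generated by the SCP_ls algorithm. -/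
structure SCPlsSeq {n m : ℕ} (f P1 P2 : Euc n → ℝ) (f' : Euc n → Euc n)
    (g : Fin m → Euc n → ℝ) (g' : Fin m → Euc n → Euc n)
    (c Llo : ℝ) (x ξ : ℕ → Euc n) (Lfs : ℕ → ℝ)
    (Lgs : ℕ → EuclideanSpace ℝ (Fin m)) : Prop where
  feas0 : ∀ i, g i (x 0) ≤ 0
  subgrad : ∀ t, ξ t ∈ ConvexSubdiff P2 (x t)
  Lf_lb : ∀ t, Llo ≤ Lfs t
  Lg_lb : ∀ t i, Llo ≤ Lgs t i
  bdd : ∃ M : ℝ, ∀ t, Lfs t ≤ M ∧ ∀ i, Lgs t i ≤ M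
  feas_sub : ∀ t i, barG g g' (x (t + 1)) (x t) (Lgs t) i ≤ 0
  min : ∀ t z, (∀ i, barG g g' z (x t) (Lgs t) i ≤ 0) →
    ⟪f' (x t) - ξ t, x (t + 1) - x t⟫ + Lfs t / 2 * ‖x (t + 1) - x t‖ ^ 2
        + P1 (x (t + 1))
      ≤ ⟪f' (x t) - ξ t, z - x t⟫ + Lfs t / 2 * ‖z - x t‖ ^ 2 + P1 z
  uniq : ∀ t z, (∀ i, barG g g' z (x t) (Lgs t) i ≤ 0) →
    ⟪f' (x t) - ξ t, z - x t⟫ + Lfs t / 2 * ‖z - x t‖ ^ 2 + P1 z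
      ≤ ⟪f' (x t) - ξ t, x (t + 1) - x t⟫ + Lfs t / 2 * ‖x (t + 1) - x t‖ ^ 2
        + P1 (x (t + 1)) → z = x (t + 1)
  feas : ∀ t i, g i (x (t + 1)) ≤ 0
  descent : ∀ t, f (x (t + 1)) + P1 (x (t + 1)) - P2 (x (t + 1)) ≤
    f (x t) + P1 (x t) - P2 (x t) - c / 2 * ‖x (t + 1) - x t‖ ^ 2

/-- Cluster points of a sequence (limits of subsequences). -/
def seqClusterPts {X : Type*} [TopologicalSpace X] (u : ℕ → X) : Set X :=
  {p | ∃ φ : ℕ → ℕ, StrictMono φ ∧ Tendsto (u ∘ φ) atTop (𝓝 p)}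


/-! ### Auxiliary lemmas for statement 14 -/

section Stmt14Aux

variable {E : Type*} [NormedAddCommGroup E] [InnerProductSpace ℝ E] [CompleteSpace E]

/-- Gradient inequality for convex functions. -/
lemma convex_grad_ineq {φ : E → ℝ} {G y : E} (hc : ConvexOn ℝ univ φ)
    (hg : HasGradientAt φ G y) (z : E) : φ y + ⟪G, z - y⟫ ≤ φ z := by
  set L := AffineMap.lineMap (k := ℝ) y z with hL
  have hfun : ∀ t : ℝ, L t = t • (z - y) + y := fun t => AffineMap.lineMap_apply_module' y z t
  have hline : ConvexOn ℝ univ (fun t : ℝ => φ (L t)) := by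
    exact hc.comp_affineMap L
  have hl : HasDerivAt (fun t : ℝ => L t) (z - y) 0 := by
    have h0 : HasDerivAt (fun t : ℝ => t • (z - y) + y) (z - y) 0 := by
      simpa using ((hasDerivAt_id (0:ℝ)).smul_const (z - y)).add_const y
    simpa [funext hfun] using h0
  have hcomp : HasDerivAt (fun t : ℝ => φ (L t)) ⟪G, z - y⟫ 0 := by
    have h1 : HasFDerivAt φ (InnerProductSpace.toDual ℝ E G) (L 0) := by
      rw [show L 0 = y by simp [hfun]]
      exact hg.hasFDerivAt
    exact h1.comp_hasDerivAt 0 hl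
  have hs := hline.le_slope_of_hasDerivAt (mem_univ (0:ℝ)) (mem_univ (1:ℝ)) one_pos hcomp
  have h10 : L 1 = z := by simp [hfun]
  have h00 : L 0 = y := by simp [hfun]
  rw [slope_def_field] at hs
  simp [h10, h00] at hs
  linarith

/-- The descent lemma: quadratic upper bound for functions with Lipschitz gradient. -/
lemma descent_lemma {φ : E → ℝ} {φ' : E → E} {K : NNReal}
    (hd : ∀ x, HasGradientAt φ (φ' x) x) (hl : LipschitzWith K φ') (y u : E) :
    φ u ≤ φ y + ⟪φ' y, u - y⟫ + (K : ℝ) / 2 * ‖u - y‖ ^ 2 := by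
  set d := u - y with hd'
  set ψ : ℝ → ℝ := fun t => φ (y + t • d) - t * ⟪φ' y, d⟫ - (K : ℝ) * t ^ 2 * ‖d‖ ^ 2 / 2 with hψdef
  have hline : ∀ t : ℝ, HasDerivAt (fun s : ℝ => y + s • d) d t := by
    intro t
    simpa using ((hasDerivAt_id t).smul_const d).const_add y
  have hψ : ∀ t : ℝ, HasDerivAt ψ
      (⟪φ' (y + t • d), d⟫ - ⟪φ' y, d⟫ - (K : ℝ) * t * ‖d‖ ^ 2) t := by
    intro t
    have h1 : HasDerivAt (fun s : ℝ => φ (y + s • d)) ⟪φ' (y + t • d), d⟫ t := by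
      exact
        ((hd (y + t • d)).hasFDerivAt).comp_hasDerivAt t (hline t)
    have h2 : HasDerivAt (fun s : ℝ => s * ⟪φ' y, d⟫) ⟪φ' y, d⟫ t := by
      simpa using (hasDerivAt_id t).mul_const (⟪φ' y, d⟫ : ℝ)
    have h3 : HasDerivAt (fun s : ℝ => (K : ℝ) * s ^ 2 * ‖d‖ ^ 2 / 2)
        ((K : ℝ) * t * ‖d‖ ^ 2) t := by
      have := (((hasDerivAt_pow 2 t).const_mul (K : ℝ)).mul_const (‖d‖ ^ 2)).div_const 2
      refine this.congr_deriv ?_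
      ring
    exact (h1.sub h2).sub h3
  have hanti : AntitoneOn ψ (Icc (0:ℝ) 1) := by
    apply antitoneOn_of_deriv_nonpos (convex_Icc 0 1)
    · exact fun t _ => (hψ t).continuousAt.continuousWithinAt
    · exact fun t _ => (hψ t).differentiableAt.differentiableWithinAt
    · intro t ht
      rw [interior_Icc] at ht
      rw [(hψ t).deriv]
      have hip : ⟪φ' (y + t • d) - φ' y, d⟫ ≤ (K : ℝ) * t * ‖d‖ ^ 2 := by
        have hle : ‖φ' (y + t • d) - φ' y‖ ≤ (K : ℝ) * (t * ‖d‖) := by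
          have h := hl.dist_le_mul (y + t • d) y
          rw [dist_eq_norm, dist_eq_norm] at h
          have he : y + t • d - y = t • d := by abel
          rw [he] at h
          calc ‖φ' (y + t • d) - φ' y‖ ≤ (K : ℝ) * ‖t • d‖ := h
            _ = (K : ℝ) * (|t| * ‖d‖) := by rw [norm_smul]; simp
            _ = (K : ℝ) * (t * ‖d‖) := by rw [abs_of_pos ht.1]
        calc ⟪φ' (y + t • d) - φ' y, d⟫ ≤ ‖φ' (y + t • d) - φ' y‖ * ‖d‖ :=
              real_inner_le_norm _ _
          _ ≤ (K : ℝ) * (t * ‖d‖) * ‖d‖ := mul_le_mul_of_nonneg_right hle (norm_nonneg d)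
          _ = (K : ℝ) * t * ‖d‖ ^ 2 := by ring
      rw [inner_sub_left] at hip
      linarith
  have h10 := hanti (by constructor <;> norm_num : (0:ℝ) ∈ Icc (0:ℝ) 1)
    (by constructor <;> norm_num : (1:ℝ) ∈ Icc (0:ℝ) 1) zero_le_one
  have hyu : y + (1:ℝ) • d = u := by simp [hd']
  have hy0 : y + (0:ℝ) • d = y := by simp
  simp only [hψdef, hyu, hy0, one_pow, one_mul] at h10
  norm_num at h10
  linarith

/-- A continuous convex function on a complete inner product space has a subgradient
at every point. -/
lemma convexSubdiff_nonempty {P : E → ℝ} (hc : ConvexOn ℝ univ P)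
    (hcont : Continuous P) (x : E) : ∃ u, u ∈ ConvexSubdiff P x := by
  set S : Set (E × ℝ) := {p | P p.1 < p.2} with hS
  have hSopen : IsOpen S := isOpen_lt (hcont.comp continuous_fst) continuous_snd
  have hSconv : Convex ℝ S := by
    intro p hp q hq a b ha hb hab
    have hcc := hc.2 (mem_univ p.1) (mem_univ q.1) ha hb hab
    have hmain : a • P p.1 + b • P q.1 < a * p.2 + b * q.2 := by
      rcases eq_or_lt_of_le ha with h0 | h0
      · have hb1 : b = 1 := by rw [← h0] at hab; simpa using hab
        simp only [← h0, hb1, zero_smul, one_smul, zero_mul, one_mul, zero_add]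
        exact hq
      · have h1 : a • P p.1 < a * p.2 := by
          simpa [smul_eq_mul] using (mul_lt_mul_of_pos_left hp h0)
        have h2 : b • P q.1 ≤ b * q.2 := by
          simpa [smul_eq_mul] using (mul_le_mul_of_nonneg_left (le_of_lt hq) hb)
        linarith
    show P (a • p + b • q).1 < (a • p + b • q).2
    have h1 : (a • p + b • q).1 = a • p.1 + b • q.1 := rfl
    have h2 : (a • p + b • q).2 = a * p.2 + b * q.2 := rfl
    rw [h1, h2]
    exact lt_of_le_of_lt hcc hmain
  have hxnot : (x, P x) ∉ S := by simp [hS]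
  obtain ⟨L, hL⟩ := geometric_hahn_banach_open_point hSconv hSopen hxnot
  set c := L (0, 1) with hcdef
  have hsplit : ∀ (z : E) (t : ℝ), L (z, t) = L (z, 0) + t * c := by
    intro z t
    have h : ((z, t) : E × ℝ) = (z, 0) + t • (0, 1) := by
      simp [Prod.ext_iff]
    rw [h, map_add, map_smul, smul_eq_mul, hcdef]
  have hcneg : c < 0 := by
    have h1 := hL (x, P x + 1) (by simp [hS])
    have hx2 := hsplit x (P x)
    rw [hsplit] at h1
    linarith
  have key : ∀ z : E, L (z, 0) + P z * c ≤ L (x, 0) + P x * c := by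
    intro z
    refine le_of_forall_pos_le_add fun ε hε => ?_
    set s := ε / (-c) with hsdef
    have hs : 0 < s := div_pos hε (neg_pos.2 hcneg)
    have h1 := hL (z, P z + s) (by simp [hS, hs])
    have hx2 := hsplit x (P x)
    rw [hsplit] at h1
    have hsc : s * (-c) = ε := div_mul_cancel₀ ε (by linarith : (-c) ≠ 0)
    nlinarith
  refine ⟨(InnerProductSpace.toDual ℝ E).symm
    ((-c)⁻¹ • (L.comp (ContinuousLinearMap.inl ℝ E ℝ))), fun z => ?_⟩
  rw [InnerProductSpace.toDual_symm_apply]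
  have happ : ((-c)⁻¹ • (L.comp (ContinuousLinearMap.inl ℝ E ℝ))) (z - x)
      = (-c)⁻¹ * (L (z, 0) - L (x, 0)) := by
    have h : ((z - x, (0:ℝ)) : E × ℝ) = (z, 0) - (x, 0) := by simp [Prod.ext_iff]
    simp [ContinuousLinearMap.smul_apply, ContinuousLinearMap.comp_apply,
      ContinuousLinearMap.inl_apply, h, map_sub, smul_eq_mul]
    ring
  rw [happ]
  have h2 : L (z, 0) - L (x, 0) ≤ (P z - P x) * (-c) := by
    nlinarith [key z]
  have hpos : (0:ℝ) < (-c)⁻¹ := inv_pos.2 (by linarith)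
  calc (-c)⁻¹ * (L (z, 0) - L (x, 0)) ≤ (-c)⁻¹ * ((P z - P x) * (-c)) :=
        mul_le_mul_of_nonneg_left h2 (le_of_lt hpos)
    _ = P z - P x := by
        have hc0 : c ≠ 0 := by linarith
        field_simp

end Stmt14Aux

section Stmt14Main

variable {n m : ℕ}

/-- Embedding of `ℝⁿ × ℝⁿ × ℝᵐ` data into the product space `PS n m`. -/
def mk3 (a b : Euc n) (w : EuclideanSpace ℝ (Fin m)) : PS n m := WithLp.toLp 2 (a, WithLp.toLp 2 (b, w))

/-- The vector of prox parameters `L_{g_i}⁺ + 1`. -/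
def klwvec (Lg : Fin m → ℝ) : EuclideanSpace ℝ (Fin m) := WithLp.toLp 2 (fun i => ((Lg i).toNNReal : ℝ) + 1)

lemma Fobj_feas_of_ne_top {f P1 P2 : Euc n → ℝ} {g : Fin m → Euc n → ℝ} {x : Euc n}
    (h : Fobj f P1 P2 g x ≠ ⊤) : ∀ i, g i x ≤ 0 := by
  by_contra hc
  rw [Fobj, if_neg hc] at h
  exact h rfl

lemma barF_at_diag {f P1 P2 : Euc n → ℝ} {g : Fin m → Euc n → ℝ}
    {g' : Fin m → Euc n → Euc n} {x : Euc n} (h : ∀ i, g i x ≤ 0)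
    (w : EuclideanSpace ℝ (Fin m)) :
    barF f P1 P2 g g' (mk3 x x w) = Fobj f P1 P2 g x := by
  rw [barF, Fobj, if_pos h, if_pos]
  · rfl
  · intro i
    show g i x + ⟪g' i x, x - x⟫ + w i / 2 * ‖x - x‖ ^ 2 ≤ 0
    simpa using h i

lemma norm_mk3_fst (ζ : Euc n) : ‖mk3 (m := m) ζ 0 0‖ = ‖ζ‖ := by
  rw [WithLp.prod_norm_eq_of_L2]
  have h1 : (mk3 (m := m) ζ 0 0).fst = ζ := rfl
  have h2 : (mk3 (m := m) ζ 0 0).snd = 0 := rfl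
  rw [h1, h2, norm_zero]
  norm_num [Real.sqrt_sq (norm_nonneg ζ)]

lemma inner_mk3_fst (ζ : Euc n) (q p : PS n m) :
    ⟪mk3 ζ 0 0, q - p⟫ = ⟪ζ, q.ofLp.1 - p.ofLp.1⟫ := by
  rw [WithLp.prod_inner_apply]
  have h2 : (mk3 (m := m) ζ 0 0).ofLp.2 = 0 := rfl
  rw [h2, inner_zero_left, add_zero]
  rfl

lemma norm_fst_le_ps (q p : PS n m) : ‖q.ofLp.1 - p.ofLp.1‖ ≤ ‖q - p‖ := by
  calc ‖q.ofLp.1 - p.ofLp.1‖ = Real.sqrt (‖(q - p).fst‖ ^ 2) := by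
        rw [show (q - p).fst = q.ofLp.1 - p.ofLp.1 from rfl, Real.sqrt_sq (norm_nonneg _)]
    _ ≤ Real.sqrt (‖(q - p).fst‖ ^ 2 + ‖(q - p).snd‖ ^ 2) :=
        Real.sqrt_le_sqrt (le_add_of_nonneg_right (sq_nonneg _))
    _ = ‖q - p‖ := (WithLp.prod_norm_eq_of_L2 (α := Euc n)
        (β := WithLp 2 (Euc n × EuclideanSpace ℝ (Fin m))) _).symm

lemma continuous_mk3_diag (w : EuclideanSpace ℝ (Fin m)) :
    Continuous (fun u : Euc n => mk3 u u w) := by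
  unfold mk3
  exact (WithLp.prod_continuous_toLp 2 _ _).comp (continuous_id.prodMk
    ((WithLp.prod_continuous_toLp 2 _ _).comp (continuous_id.prodMk continuous_const)))

lemma continuous_mk3_fst :
    Continuous (fun u : Euc n => mk3 (m := m) u 0 0) := by
  unfold mk3
  exact (WithLp.prod_continuous_toLp 2 _ _).comp (continuous_id.prodMk continuous_const)

/-- Transfer of regular subgradients from `F` to `bar F`. -/
lemma regular_transfer {f P1 P2 : Euc n → ℝ} {g : Fin m → Euc n → ℝ}
    {g' : Fin m → Euc n → Euc n} {Lg : Fin m → ℝ}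
    (hg' : ∀ i x, HasGradientAt (g i) (g' i x) x)
    (hLg : ∀ i, LipschitzWith (Lg i).toNNReal (g' i))
    {x ζ : Euc n} (hζ : ζ ∈ RegularSubdiff (Fobj f P1 P2 g) x) :
    mk3 ζ 0 0 ∈ RegularSubdiff (barF f P1 P2 g g') (mk3 x x (klwvec Lg)) := by
  obtain ⟨hne_top, hne_bot, hev⟩ := hζ
  have hfeas : ∀ i, g i x ≤ 0 := Fobj_feas_of_ne_top hne_top
  have hbF : barF f P1 P2 g g' (mk3 x x (klwvec Lg)) = Fobj f P1 P2 g x :=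
    barF_at_diag hfeas _
  refine ⟨by rw [hbF]; exact hne_top, by rw [hbF]; exact hne_bot, ?_⟩
  intro ε hε
  have hT1 : Tendsto (fun q : PS n m => q.ofLp.1) (𝓝 (mk3 x x (klwvec Lg))) (𝓝 x) :=
    (continuous_fst.comp (WithLp.prod_continuous_ofLp 2 _ _) :
      Continuous (fun q : PS n m => q.ofLp.1)).tendsto _
  have hev2 : ∀ᶠ q : PS n m in 𝓝 (mk3 x x (klwvec Lg)),
      (((Fobj f P1 P2 g x).toReal + ⟪ζ, q.ofLp.1 - x⟫ - ε * ‖q.ofLp.1 - x‖ : ℝ) : EReal)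
        ≤ Fobj f P1 P2 g q.ofLp.1 := hT1.eventually (hev ε hε)
  have hev3 : ∀ᶠ q : PS n m in 𝓝 (mk3 x x (klwvec Lg)),
      ∀ i, ((Lg i).toNNReal : ℝ) ≤ q.ofLp.2.ofLp.2 i := by
    rw [eventually_all]
    intro i
    have hcoord : Continuous (fun q : PS n m => q.ofLp.2.ofLp.2 i) := by
      fun_prop
    have ht : Tendsto (fun q : PS n m => q.ofLp.2.ofLp.2 i) (𝓝 (mk3 x x (klwvec Lg)))
        (𝓝 (((Lg i).toNNReal : ℝ) + 1)) := hcoord.tendsto _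
    exact ht.eventually (eventually_ge_nhds (by linarith))
  filter_upwards [hev2, hev3] with q h1 h2
  by_cases hb : ∀ i, barG g g' q.ofLp.1 q.ofLp.2.ofLp.1 q.ofLp.2.ofLp.2 i ≤ 0
  · have hfeasq : ∀ i, g i q.ofLp.1 ≤ 0 := by
      intro i
      have hdl := descent_lemma (hg' i) (hLg i) q.ofLp.2.ofLp.1 q.ofLp.1
      have hbi := hb i
      rw [barG] at hbi
      nlinarith [mul_le_mul_of_nonneg_right (h2 i) (sq_nonneg ‖q.ofLp.1 - q.ofLp.2.ofLp.1‖)]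
    have hq : barF f P1 P2 g g' q = Fobj f P1 P2 g q.ofLp.1 := by
      rw [barF, if_pos hb, Fobj, if_pos hfeasq]
    rw [hq]
    refine le_trans ?_ h1
    rw [hbF, inner_mk3_fst]
    rw [show (mk3 x x (klwvec Lg)).ofLp.1 = x from rfl]
    apply EReal.coe_le_coe_iff.mpr
    have hn' : ‖q.ofLp.1 - x‖ ≤ ‖q - mk3 x x (klwvec Lg)‖ := norm_fst_le_ps q (mk3 x x (klwvec Lg))
    have hmul : ε * ‖q.ofLp.1 - x‖ ≤ ε * ‖q - mk3 x x (klwvec Lg)‖ :=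
      mul_le_mul_of_nonneg_left hn' (le_of_lt hε)
    linarith
  · have htop : barF f P1 P2 g g' q = ⊤ := by
      rw [barF]
      exact if_neg hb
    rw [htop]
    exact le_top

/-- Transfer of limiting subgradients from `F` to `bar F`, together with feasibility. -/
lemma lim_transfer {f P1 P2 : Euc n → ℝ} {g : Fin m → Euc n → ℝ}
    {g' : Fin m → Euc n → Euc n} {Lg : Fin m → ℝ}
    (hg' : ∀ i x, HasGradientAt (g i) (g' i x) x)
    (hLg : ∀ i, LipschitzWith (Lg i).toNNReal (g' i))
    (hgcont : ∀ i, Continuous (g i))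
    {x ζ : Euc n} (hζ : ζ ∈ LimSubdiff (Fobj f P1 P2 g) x) :
    (∀ i, g i x ≤ 0) ∧
      mk3 ζ 0 0 ∈ LimSubdiff (barF f P1 P2 g g') (mk3 x x (klwvec Lg)) := by
  obtain ⟨xs, ζs, hreg, hxs, hFs, hζs⟩ := hζ
  have hfeas_k : ∀ k i, g i (xs k) ≤ 0 := fun k => Fobj_feas_of_ne_top (hreg k).1
  have hfeas : ∀ i, g i x ≤ 0 := by
    intro i
    refine le_of_tendsto (((hgcont i).tendsto x).comp hxs) ?_
    exact Eventually.of_forall fun k => hfeas_k k i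
  refine ⟨hfeas, ⟨fun k => mk3 (xs k) (xs k) (klwvec Lg), fun k => mk3 (ζs k) 0 0,
    fun k => regular_transfer hg' hLg (hreg k), ?_, ?_, ?_⟩⟩
  · exact ((continuous_mk3_diag (klwvec Lg)).tendsto x).comp hxs
  · have h1 : ∀ k, barF f P1 P2 g g' (mk3 (xs k) (xs k) (klwvec Lg))
        = Fobj f P1 P2 g (xs k) := fun k => barF_at_diag (hfeas_k k) _
    rw [barF_at_diag hfeas]
    exact hFs.congr fun k => (h1 k).symm
  · exact (continuous_mk3_fst.tendsto ζ).comp hζs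

/-- In the convex setting the limiting subdifferential of `F` is nonempty at
every feasible point. -/
lemma fobj_limsubdiff_nonempty {f P1 P2 : Euc n → ℝ} {f' : Euc n → Euc n}
    {g : Fin m → Euc n → ℝ} (hf' : ∀ x, HasGradientAt f (f' x) x)
    (hfconv : ConvexOn ℝ univ f) (hP1conv : ConvexOn ℝ univ P1)
    (hP1cont : Continuous P1) (hP2 : P2 = fun _ => 0)
    {x : Euc n} (hfeas : ∀ i, g i x ≤ 0) :
    (LimSubdiff (Fobj f P1 P2 g) x).Nonempty := by
  obtain ⟨u, hu⟩ := convexSubdiff_nonempty hP1conv hP1cont x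
  refine ⟨f' x + u, ?_⟩
  have hx : Fobj f P1 P2 g x = ((f x + P1 x - P2 x : ℝ) : EReal) := if_pos hfeas
  have hreg : f' x + u ∈ RegularSubdiff (Fobj f P1 P2 g) x := by
    refine ⟨by rw [hx]; exact EReal.coe_ne_top _, by rw [hx]; exact EReal.coe_ne_bot _, ?_⟩
    intro ε hε
    refine Eventually.of_forall fun z => ?_
    by_cases hz : ∀ i, g i z ≤ 0
    · have hzeq : Fobj f P1 P2 g z = ((f z + P1 z - P2 z : ℝ) : EReal) := by
        rw [Fobj]; exact if_pos hz
      rw [hzeq, hx, EReal.toReal_coe]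
      have h1 : f x + ⟪f' x, z - x⟫ ≤ f z := convex_grad_ineq hfconv (hf' x) z
      have h2 : ⟪u, z - x⟫ ≤ P1 z - P1 x := hu z
      apply EReal.coe_le_coe_iff.mpr
      have h3 : (⟪f' x + u, z - x⟫ : ℝ) = ⟪f' x, z - x⟫ + ⟪u, z - x⟫ := inner_add_left _ _ _
      have h4 : P2 z = 0 := by rw [hP2]
      have h5 : P2 x = 0 := by rw [hP2]
      have h6 : (0:ℝ) ≤ ε * ‖z - x‖ := mul_nonneg (le_of_lt hε) (norm_nonneg _)
      rw [h3, h4, h5]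
      linarith
    · have hzeq : Fobj f P1 P2 g z = ⊤ := by
        rw [Fobj]; exact if_neg hz
      rw [hzeq]; exact le_top
  exact ⟨fun _ => x, fun _ => f' x + u, fun _ => hreg, tendsto_const_nhds,
    tendsto_const_nhds, tendsto_const_nhds⟩

end Stmt14Main

/-- in the convex setting, if `bar F` is a KL function with exponent
`α ∈ [0,1)`, then so is `F`. -/
theorem stmt14 {n m : ℕ} (f P1 P2 : Euc n → ℝ) (f' : Euc n → Euc n)
    (g : Fin m → Euc n → ℝ) (g' : Fin m → Euc n → Euc n)
    (Lf : ℝ) (Lg : Fin m → ℝ)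
    (hAB : AssumptionAB f P1 P2 f' g g' Lf Lg)
    (hC : ∀ i, ContDiff ℝ 2 (g i))
    (hP2 : P2 = fun _ => 0) (hfconv : ConvexOn ℝ univ f)
    (hgconv : ∀ i, ConvexOn ℝ univ (g i))
    (α : ℝ) (hα0 : 0 ≤ α) (hα1 : α < 1)
    (hKLbar : ∀ p, (LimSubdiff (barF f P1 P2 g g') p).Nonempty →
      KLExpAt (barF f P1 P2 g g') α p) :
    ∀ x, (LimSubdiff (Fobj f P1 P2 g) x).Nonempty →
      KLExpAt (Fobj f P1 P2 g) α x := by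
  obtain ⟨hf', hLf, hP1conv, hP1cont, hP2conv, hP2cont, hg', hLg, hfeas_ne, hlevel, hMFCQ⟩ := hAB
  intro xh hne
  obtain ⟨ζh, hζh⟩ := hne
  have hgcont : ∀ i, Continuous (g i) := fun i => (hC i).continuous
  obtain ⟨hxh_feas, hmem⟩ := lim_transfer hg' hLg hgcont hζh
  obtain ⟨a₀, ha₀, a, ha, V, hV, hKL⟩ := hKLbar (mk3 xh xh (klwvec Lg)) ⟨_, hmem⟩
  refine ⟨a₀, ha₀, a, ha, (fun u : Euc n => mk3 u u (klwvec Lg)) ⁻¹' V, ?_, ?_⟩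
  · exact (continuous_mk3_diag (klwvec Lg)).continuousAt.preimage_mem_nhds hV
  · intro x hxV hlow hupp
    have hFxh : Fobj f P1 P2 g xh = ((f xh + P1 xh - P2 xh : ℝ) : EReal) := if_pos hxh_feas
    have hx_ne_top : Fobj f P1 P2 g x ≠ ⊤ := by
      intro htop
      rw [htop, hFxh] at hupp
      rw [← EReal.coe_add] at hupp
      exact absurd hupp (not_lt.mpr le_top)
    have hx_feas := Fobj_feas_of_ne_top hx_ne_top
    have hFx : Fobj f P1 P2 g x = ((f x + P1 x - P2 x : ℝ) : EReal) := if_pos hx_feas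
    have hbx := barF_at_diag (f := f) (P1 := P1) (P2 := P2) (g' := g') hx_feas (klwvec Lg)
    have hbxh := barF_at_diag (f := f) (P1 := P1) (P2 := P2) (g' := g') hxh_feas (klwvec Lg)
    have h1 := hKL (mk3 x x (klwvec Lg)) hxV (by rw [hbx, hbxh]; exact hlow)
      (by rw [hbx, hbxh]; exact hupp)
    rw [hbx, hbxh] at h1
    have hS1ne : (LimSubdiff (Fobj f P1 P2 g) x).Nonempty :=
      fobj_limsubdiff_nonempty hf' hfconv hP1conv hP1cont hP2 hx_feas
    have hcomp : infDist 0 (LimSubdiff (barF f P1 P2 g g') (mk3 x x (klwvec Lg)))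
        ≤ infDist 0 (LimSubdiff (Fobj f P1 P2 g) x) := by
      by_contra hlt
      push_neg at hlt
      obtain ⟨ξ, hξmem, hξd⟩ := (infDist_lt_iff hS1ne).1 hlt
      have hmem2 := (lim_transfer hg' hLg hgcont hξmem).2
      have hd := infDist_le_dist_of_mem (x := (0 : PS n m)) hmem2
      rw [dist_zero_left, norm_mk3_fst] at hd
      rw [dist_zero_left] at hξd
      linarith
    have hcoef : 0 ≤ a₀ * (1 - α) *
        ((Fobj f P1 P2 g x).toReal - (Fobj f P1 P2 g xh).toReal) ^ (-α) := by
      have hΔ : 0 ≤ (Fobj f P1 P2 g x).toReal - (Fobj f P1 P2 g xh).toReal := by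
        rw [hFx, hFxh] at hlow ⊢
        rw [EReal.toReal_coe, EReal.toReal_coe]
        have := EReal.coe_lt_coe_iff.1 hlow
        linarith
      exact mul_nonneg (mul_nonneg (le_of_lt ha₀) (by linarith)) (Real.rpow_nonneg hΔ _)
    calc (1:ℝ) ≤ _ := h1
      _ ≤ _ := mul_le_mul_of_nonneg_left hcomp hcoef
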